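/- Let A be the algebra generated by a with every word containing two or more subwords a² equal to zero, and fix an arrangement of parentheses T (realized as a word T₁,…,T_{n−2} of left/right multiplications). The polynomials g₀(x₁,x₂) = (x̄₁x̄₂)T_{1,x₁}⋯T_{n−2,x₁} and g₁(x₁,x₂) = (x̄₁x₁)T̄_{1,x₂}T_{2,x₁}⋯T_{n−2,x₁} are linearly independent modulo the identities of A: if α g₀ + β g₁ vanishes under all evaluations in A, then α = β = 0. -/

import Mathlib

noncomputable section

open Filter Topology

/-- Is a free-magma element a single leaf? -/
def FreeMagma.isLeaf {X : Type*} : FreeMagma X → Bool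
  | .of _ => true
  | .mul _ _ => false

/-- The number of occurrences of the subword `a·a` in a monomial in one generator `a`. -/
def countSq : FreeMagma Unit → ℕ
  | .of _ => 0
  | .mul x y => countSq x + countSq y + (if x.isLeaf && y.isLeaf then 1 else 0)

variable (F : Type) [Field F] [CharZero F]

/-- The free nonassociative (non-unital) algebra on one generator `a`. -/
abbrev FA := FreeNonUnitalNonAssocAlgebra F Unit

/-- The monomial of `FA F` corresponding to a magma word. -/
def mono (m : FreeMagma Unit) : FA F := MonoidAlgebra.single m (1 : F)

/-- The relations ideal of `A`: the span of all monomials containing two or more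
subwords equal to `a²`.  The algebra `A` of the paper is `FA F` modulo `relI F`. -/
def relI : Submodule F (FA F) :=
  Submodule.span F {x : FA F | ∃ m : FreeMagma Unit, 2 ≤ countSq m ∧ x = mono F m}

/-- Number of occurrences of the variable `i` in a magma word over `ℕ`. -/
def occ : FreeMagma ℕ → ℕ → ℕ
  | .of j, i => if j = i then 1 else 0
  | .mul x y, i => occ x i + occ y i

/-- The free nonassociative algebra on countably many variables `x₀, x₁, …`. -/
abbrev FreeN := FreeNonUnitalNonAssocAlgebra F ℕ

/-- The monomial of `FreeN F` corresponding to a magma word. -/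
def monoN (t : FreeMagma ℕ) : FreeN F := MonoidAlgebra.single t (1 : F)

/-- `P_n`: the space of multilinear polynomials in the variables `x₀, …, x_{n-1}`. -/
def Pmulti (n : ℕ) : Submodule F (FreeN F) :=
  Submodule.span F {x : FreeN F | ∃ t : FreeMagma ℕ,
    (∀ i : ℕ, occ t i = if i < n then 1 else 0) ∧ x = monoN F t}

/-- The identities of the algebra `A = FA F / relI F`: polynomials vanishing under every
substitution of elements of `A`. -/
def IdA : Submodule F (FreeN F) :=
  ⨅ xs : ℕ → FA F,
    Submodule.comap (FreeNonUnitalNonAssocAlgebra.lift F xs : FreeN F →ₗ[F] FA F) (relI F)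

/-- The `n`-th codimension of `A`: the dimension of `P_n/(P_n ∩ Id(A))`. -/
def codimA (n : ℕ) : ℕ :=
  Module.finrank F (↥(Pmulti F n) ⧸ Submodule.comap (Pmulti F n).subtype (IdA F))

/-- Apply a list of (operator letter, argument) pairs to a magma word, left-to-right:
letter `0` is left multiplication by the argument, letter `1` is right multiplication. -/
def chainArgs : FreeMagma ℕ → List (Fin 2 × FreeMagma ℕ) → FreeMagma ℕ
  | t, [] => t
  | t, (b, x) :: r => chainArgs (if b = 1 then t * x else x * t) r

/-- The monomial `(u·x₀)T₁,x₀ ⋯ T_{i},v ⋯ T_{n-2},x₀` (the `i`-th operator, 0-indexed,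
takes the argument `v`, all others take `x₀`). -/
def giMono (T : List (Fin 2)) (i : ℕ) (u v : FreeMagma ℕ) : FreeMagma ℕ :=
  chainArgs (u * FreeMagma.of 0)
    (T.zip ((List.range T.length).map fun k => if k = i then v else FreeMagma.of 0))

/-- The highest weight vector `g_i(x₀,x₁)`, alternating in the first occurrence of `x₀`
and the occurrence of `x₁` at operator position `i`. -/
def gPoly (T : List (Fin 2)) (i : ℕ) : FreeN F :=
  monoN F (giMono T i (FreeMagma.of 0) (FreeMagma.of 1)) -
    monoN F (giMono T i (FreeMagma.of 1) (FreeMagma.of 0))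

/-- The generic multilinear monomial `x₀x₁ T₁,x₂ ⋯ T_{n-2},x_{n-1}` with arrangement `T`. -/
def genericMono (T : List (Fin 2)) : FreeMagma ℕ :=
  chainArgs (FreeMagma.of 0 * FreeMagma.of 1)
    (T.zip ((List.range T.length).map fun k => FreeMagma.of (k + 2)))

/-- The highest weight vector `g₀(x₀,x₁) = (x̄₀x̄₁)T₁,x₀ ⋯ T_{n-2},x₀`. -/
def g0Poly (T : List (Fin 2)) : FreeN F :=
  monoN F (chainArgs (FreeMagma.of 0 * FreeMagma.of 1)
      (T.zip ((List.range T.length).map fun _ => FreeMagma.of 0))) -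
    monoN F (chainArgs (FreeMagma.of 1 * FreeMagma.of 0)
      (T.zip ((List.range T.length).map fun _ => FreeMagma.of 0)))

namespace G0G1Aux

abbrev a : FreeMagma Unit := FreeMagma.of ()

def fsub : FreeMagma ℕ → FreeMagma Unit
  | .of i => if i = 1 then a * a else a
  | .mul x y => fsub x * fsub y

def xs : ℕ → FA F := fun i => mono F (fsub (.of i))

lemma monoN_mul (x y : FreeMagma ℕ) : monoN F (x * y) = monoN F x * monoN F y := by
  simp [monoN, MonoidAlgebra.single_mul_single]

lemma lift_monoN (t : FreeMagma ℕ) :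
    FreeNonUnitalNonAssocAlgebra.lift F (xs F) (monoN F t) = mono F (fsub t) := by
  induction t with
  | ih1 i =>
    have h1 : monoN F (.of i) = FreeNonUnitalNonAssocAlgebra.of F i := rfl
    rw [h1, FreeNonUnitalNonAssocAlgebra.lift_of_apply]
    rfl
  | ih2 x y ihx ihy =>
    have h2 : (FreeMagma.mul x y) = x * y := rfl
    rw [monoN_mul, map_mul, ihx, ihy]
    show mono F (fsub x) * mono F (fsub y) = mono F (fsub x * fsub y)
    simp [mono, MonoidAlgebra.single_mul_single]

lemma relI_le_supported :
    relI F ≤ (Finsupp.supported F F {m : FreeMagma Unit | 2 ≤ countSq m}).comap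
      (MonoidAlgebra.coeffLinearEquiv F).toLinearMap := by
  rw [relI, Submodule.span_le]
  rintro x ⟨m, hm, rfl⟩
  exact Finsupp.single_mem_supported F 1 hm

def chainA : FreeMagma Unit → List (Fin 2 × FreeMagma Unit) → FreeMagma Unit
  | t, [] => t
  | t, (b, x) :: r => chainA (if b = 1 then t * x else x * t) r

lemma fsub_chainArgs (L : List (Fin 2 × FreeMagma ℕ)) (t : FreeMagma ℕ) :
    fsub (chainArgs t L) = chainA (fsub t) (L.map fun p => (p.1, fsub p.2)) := by
  induction L generalizing t with
  | nil => rfl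
  | cons p r ih =>
    obtain ⟨b, x⟩ := p
    simp only [chainArgs, List.map_cons, chainA, ih]
    congr 1
    split <;> rfl

lemma chainA_inj (L : List (Fin 2 × FreeMagma Unit)) (t₁ t₂ : FreeMagma Unit)
    (h : chainA t₁ L = chainA t₂ L) : t₁ = t₂ := by
  induction L generalizing t₁ t₂ with
  | nil => exact h
  | cons p r ih =>
    obtain ⟨b, x⟩ := p
    simp only [chainA] at h
    have := ih _ _ h
    split at this
    · exact (by injection this)
    · exact (by injection this)

lemma chainA_not_leaf (L : List (Fin 2 × FreeMagma Unit)) (t : FreeMagma Unit)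
    (ht : t.isLeaf = false) : (chainA t L).isLeaf = false := by
  induction L generalizing t with
  | nil => exact ht
  | cons p r ih =>
    obtain ⟨b, x⟩ := p
    simp only [chainA]
    apply ih
    split <;> rfl

lemma countSq_chainA (L : List (Fin 2 × FreeMagma Unit)) (t : FreeMagma Unit)
    (ht : t.isLeaf = false) :
    countSq (chainA t L) = countSq t + (L.map fun p => countSq p.2).sum := by
  induction L generalizing t with
  | nil => simp [chainA]
  | cons p r ih =>
    obtain ⟨b, x⟩ := p
    simp only [chainA, List.map_cons, List.sum_cons]
    have hb : (if (b:Fin 2) = 1 then t * x else x * t).isLeaf = false := by split <;> rfl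
    rw [ih _ hb]
    have : countSq (if (b:Fin 2) = 1 then t * x else x * t) = countSq t + countSq x := by
      split
      · show countSq (t.mul x) = _
        simp [countSq, ht]
      · show countSq (x.mul t) = _
        simp [countSq, ht]
        omega
    omega

lemma zip_map_snd {α β γ : Type*} (f : β → γ) :
    ∀ (l₁ : List α) (l₂ : List β),
      (l₁.zip l₂).map (fun p => (p.1, f p.2)) = l₁.zip (l₂.map f)
  | [], _ => by simp
  | _ :: _, [] => by simp
  | a :: l₁, b :: l₂ => by simp [zip_map_snd f l₁ l₂]

lemma fsub_of0 : fsub (.of 0) = a := rfl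
lemma fsub_of1 : fsub (.of 1) = a * a := rfl

/-- `La T` : the all-`a` argument chain. -/
def La (T : List (Fin 2)) : List (Fin 2 × FreeMagma Unit) :=
  T.zip ((List.range T.length).map fun _ => a)

/-- `Lb T` : the chain with `a²` in position `0` and `a` elsewhere. -/
def Lb (T : List (Fin 2)) : List (Fin 2 × FreeMagma Unit) :=
  T.zip ((List.range T.length).map fun k => if k = 0 then a * a else a)

lemma u1_eq (T : List (Fin 2)) :
    fsub (chainArgs (FreeMagma.of 0 * FreeMagma.of 1)
      (T.zip ((List.range T.length).map fun _ => FreeMagma.of 0))) =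
    chainA (a * (a * a)) (La T) := by
  rw [fsub_chainArgs, zip_map_snd, List.map_map, La]
  rfl

lemma u2_eq (T : List (Fin 2)) :
    fsub (chainArgs (FreeMagma.of 1 * FreeMagma.of 0)
      (T.zip ((List.range T.length).map fun _ => FreeMagma.of 0))) =
    chainA ((a * a) * a) (La T) := by
  rw [fsub_chainArgs, zip_map_snd, List.map_map, La]
  rfl

lemma u3_eq (T : List (Fin 2)) :
    fsub (giMono T 0 (.of 0) (.of 1)) = chainA (a * a) (Lb T) := by
  rw [giMono, fsub_chainArgs, zip_map_snd, List.map_map, Lb]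
  congr 1
  congr 1
  apply List.map_congr_left
  intro k _
  by_cases hk : k = 0 <;> simp [hk, fsub, Function.comp]

lemma u4_eq (T : List (Fin 2)) :
    fsub (giMono T 0 (.of 1) (.of 0)) = chainA ((a * a) * a) (La T) := by
  rw [giMono, fsub_chainArgs, zip_map_snd, List.map_map, La]
  congr 1
  congr 1
  apply List.map_congr_left
  intro k _
  by_cases hk : k = 0 <;> simp [hk, fsub, Function.comp]

lemma sum_La (T : List (Fin 2)) : ((La T).map fun p => countSq p.2).sum = 0 := by
  apply List.sum_eq_zero
  intro x hx
  simp only [List.mem_map] at hx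
  obtain ⟨⟨b, y⟩, hp, rfl⟩ := hx
  have hy := (List.of_mem_zip hp).2
  simp only [List.mem_map] at hy
  obtain ⟨k, _, rfl⟩ := hy
  rfl

lemma sum_Lb (T : List (Fin 2)) (hT : T ≠ []) :
    1 ≤ ((Lb T).map fun p => countSq p.2).sum := by
  obtain ⟨c, T', rfl⟩ := List.exists_cons_of_ne_nil hT
  have h1 : Lb (c :: T') = (c, a * a) ::
      (T'.zip (((List.range T'.length).map Nat.succ).map fun k => if k = 0 then a * a else a)) := by
    rw [Lb]
    simp [List.range_succ_eq_map, List.map_map]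
  rw [h1]
  simp only [List.map_cons, List.sum_cons]
  have h2 : countSq (a * a) = 1 := rfl
  omega

lemma countSq_u1 (T : List (Fin 2)) : countSq (chainA (a * (a * a)) (La T)) = 1 := by
  rw [countSq_chainA (La T) (a * (a * a)) rfl, sum_La]
  decide

lemma countSq_u2 (T : List (Fin 2)) : countSq (chainA ((a * a) * a) (La T)) = 1 := by
  rw [countSq_chainA (La T) ((a * a) * a) rfl, sum_La]
  decide

lemma countSq_u3 (T : List (Fin 2)) (hT : T ≠ []) :
    2 ≤ countSq (chainA (a * a) (Lb T)) := by
  rw [countSq_chainA (Lb T) (a * a) rfl]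
  have := sum_Lb T hT
  have h1 : countSq (a * a) = 1 := rfl
  omega

lemma u1_ne_u2 (T : List (Fin 2)) :
    chainA (a * (a * a)) (La T) ≠ chainA ((a * a) * a) (La T) := by
  intro h
  have := chainA_inj _ _ _ h
  injection this with h1 h2
  cases h1

end G0G1Aux

/-- `g₀` and `g₁` are linearly independent modulo the identities of `A`:
if `α g₀ + β g₁` vanishes under all evaluations in `A`, then `α = β = 0`. -/
theorem g0_g1_independent (n : ℕ) (hn : 3 ≤ n) (T : List (Fin 2)) (hT : T.length = n - 2)
    (α β : F)
    (h : ∀ xs : ℕ → FA F,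
      FreeNonUnitalNonAssocAlgebra.lift F xs (α • g0Poly F T + β • gPoly F T 0) ∈ relI F) :
    α = 0 ∧ β = 0 := by
  classical
  have hTne : T ≠ [] := by
    intro hnil
    rw [hnil] at hT
    simp at hT
    omega
  have key := h (G0G1Aux.xs F)
  have hE : (FreeNonUnitalNonAssocAlgebra.lift F (G0G1Aux.xs F))
        (α • g0Poly F T + β • gPoly F T 0)
      = α • mono F (G0G1Aux.chainA (G0G1Aux.a * (G0G1Aux.a * G0G1Aux.a)) (G0G1Aux.La T))
        + β • mono F (G0G1Aux.chainA (G0G1Aux.a * G0G1Aux.a) (G0G1Aux.Lb T))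
        - (α + β) • mono F (G0G1Aux.chainA ((G0G1Aux.a * G0G1Aux.a) * G0G1Aux.a) (G0G1Aux.La T)) := by
    rw [map_add, map_smul, map_smul, g0Poly, gPoly, map_sub, map_sub,
      G0G1Aux.lift_monoN, G0G1Aux.lift_monoN, G0G1Aux.lift_monoN, G0G1Aux.lift_monoN,
      G0G1Aux.u1_eq, G0G1Aux.u2_eq, G0G1Aux.u3_eq, G0G1Aux.u4_eq]
    module
  rw [hE] at key
  have key2 : (α • Finsupp.single (G0G1Aux.chainA (G0G1Aux.a * (G0G1Aux.a * G0G1Aux.a)) (G0G1Aux.La T)) 1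
        + β • Finsupp.single (G0G1Aux.chainA (G0G1Aux.a * G0G1Aux.a) (G0G1Aux.Lb T)) 1
        - (α + β) • Finsupp.single (G0G1Aux.chainA ((G0G1Aux.a * G0G1Aux.a) * G0G1Aux.a) (G0G1Aux.La T)) 1
        : FreeMagma Unit →₀ F)
      ∈ Finsupp.supported F F {m : FreeMagma Unit | 2 ≤ countSq m} :=
    G0G1Aux.relI_le_supported F key
  rw [Finsupp.mem_supported'] at key2
  have hsup := key2
  have hne12 : G0G1Aux.chainA (G0G1Aux.a * (G0G1Aux.a * G0G1Aux.a)) (G0G1Aux.La T)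
      ≠ G0G1Aux.chainA ((G0G1Aux.a * G0G1Aux.a) * G0G1Aux.a) (G0G1Aux.La T) :=
    G0G1Aux.u1_ne_u2 T
  have hne31 : G0G1Aux.chainA (G0G1Aux.a * G0G1Aux.a) (G0G1Aux.Lb T)
      ≠ G0G1Aux.chainA (G0G1Aux.a * (G0G1Aux.a * G0G1Aux.a)) (G0G1Aux.La T) := by
    intro hq
    have h3 := G0G1Aux.countSq_u3 T hTne
    rw [hq, G0G1Aux.countSq_u1] at h3
    omega
  have hne32 : G0G1Aux.chainA (G0G1Aux.a * G0G1Aux.a) (G0G1Aux.Lb T)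
      ≠ G0G1Aux.chainA ((G0G1Aux.a * G0G1Aux.a) * G0G1Aux.a) (G0G1Aux.La T) := by
    intro hq
    have h3 := G0G1Aux.countSq_u3 T hTne
    rw [hq, G0G1Aux.countSq_u2] at h3
    omega
  have e1 := hsup (G0G1Aux.chainA (G0G1Aux.a * (G0G1Aux.a * G0G1Aux.a)) (G0G1Aux.La T))
    (by simp [Set.mem_setOf_eq, G0G1Aux.countSq_u1])
  have e2 := hsup (G0G1Aux.chainA ((G0G1Aux.a * G0G1Aux.a) * G0G1Aux.a) (G0G1Aux.La T))
    (by simp [Set.mem_setOf_eq, G0G1Aux.countSq_u2])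
  simp only [Finsupp.sub_apply, Finsupp.add_apply, Finsupp.smul_apply,
    Finsupp.single_apply, smul_eq_mul, hne12, hne31, hne32, Ne.symm hne12,
    Ne.symm hne31, Ne.symm hne32, if_true, if_false, ite_true, ite_false,
    if_pos rfl] at e1 e2
  simp only [mul_one, mul_zero, add_zero, sub_zero, zero_sub, zero_add] at e1 e2
  refine ⟨e1, ?_⟩
  rw [e1] at e2
  simpa using e2
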